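/- Define δ(p_{S,X}) = min{‖E[f(X)|S]‖₂² : f:𝒳→ℝ, E[f(X)]=0, ‖f(X)‖₂=1}. If δ(p_{S,X}) = 0 and H(X) > 0, then there exists a conditional distribution p_{Y|X} with Y binary such that S → X → Y, I(X;Y) > 0, and S is independent of Y (I(S;Y) = 0). -/

import Mathlib

open Finset Real

lemma kl_bin_pos {u : ℝ} (h0 : 0 < u) (h1 : u < 1) (hne : u ≠ 1/2) :
    0 < u * Real.logb 2 (2*u) + (1-u) * Real.logb 2 (2*(1-u)) := by
  have h1' : 0 < 1 - u := by linarith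
  have hx : (2*u)⁻¹ ∈ Set.Ioi (0:ℝ) := Set.mem_Ioi.2 (by positivity)
  have hy : (2*(1-u))⁻¹ ∈ Set.Ioi (0:ℝ) := Set.mem_Ioi.2 (by positivity)
  have hxy : (2*u)⁻¹ ≠ (2*(1-u))⁻¹ := by
    intro h
    rw [inv_inj] at h
    apply hne; linarith
  have key := strictConcaveOn_log_Ioi.2 hx hy hxy h0 h1' (by ring)
  have hcomb : u • (2*u)⁻¹ + (1-u) • (2*(1-u))⁻¹ = 1 := by
    rw [smul_eq_mul, smul_eq_mul]; field_simp; ring_nf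
  rw [hcomb, Real.log_one, smul_eq_mul, smul_eq_mul, Real.log_inv, Real.log_inv] at key
  have hlog : 0 < u * Real.log (2*u) + (1-u) * Real.log (2*(1-u)) := by linarith [key]
  have h2 : (0:ℝ) < Real.log 2 := Real.log_pos (by norm_num)
  rw [Real.logb, Real.logb]
  rw [div_eq_mul_inv, div_eq_mul_inv]
  calc (0:ℝ) < (u * Real.log (2*u) + (1-u) * Real.log (2*(1-u))) * (Real.log 2)⁻¹ := by positivity
    _ = u * (Real.log (2*u) * (Real.log 2)⁻¹) + (1-u) * (Real.log (2*(1-u)) * (Real.log 2)⁻¹) := by ring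

lemma kl_bin_nonneg {u : ℝ} (h0 : 0 < u) (h1 : u < 1) :
    0 ≤ u * Real.logb 2 (2*u) + (1-u) * Real.logb 2 (2*(1-u)) := by
  by_cases hne : u = 1/2
  · subst hne; norm_num
  · exact (kl_bin_pos h0 h1 hne).le

/-- If the smallest PIC quantity `δ(p_{S,X}) = inf{‖E[f(X)|S]‖₂² : E f = 0, ‖f‖₂ = 1}`
is zero and `H(X) > 0`, then there exists a binary channel `p_{Y|X}` with
`S → X → Y`, `I(X;Y) > 0`, and `S` independent of `Y` (so `I(S;Y) = 0`). -/
theorem perfect_privacy_of_delta_eq_zero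
    {σ α : Type*} [Fintype σ] [Fintype α]
    (p : σ → α → ℝ) (hp0 : ∀ s x, 0 ≤ p s x) (hp1 : ∑ s, ∑ x, p s x = 1)
    (hX : ∀ x, 0 < ∑ s, p s x)
    (hH : 0 < -∑ x, (∑ s, p s x) * Real.logb 2 (∑ s, p s x))
    (hδ : sInf { t : ℝ | ∃ f : α → ℝ,
        (∑ x, (∑ s, p s x) * f x) = 0 ∧ (∑ x, (∑ s, p s x) * (f x) ^ 2) = 1 ∧
        t = ∑ s, (∑ x, p s x) *
          ((∑ x, p s x * f x) / (∑ x, p s x)) ^ 2 } = 0) :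
    ∃ W : α → Bool → ℝ, (∀ x y, 0 ≤ W x y) ∧ (∀ x, W x false + W x true = 1) ∧
      (0 < ∑ x, ∑ y : Bool, (∑ s, p s x) * W x y *
          Real.logb 2 (((∑ s, p s x) * W x y) /
            ((∑ s, p s x) * ∑ x', (∑ s, p s x') * W x' y))) ∧
      (∀ s y, (∑ x, p s x * W x y) =
          (∑ x, p s x) * ∑ x', (∑ s', p s' x') * W x' y) ∧
      (∑ s, ∑ y : Bool, (∑ x, p s x * W x y) *
          Real.logb 2 ((∑ x, p s x * W x y) /
            ((∑ x, p s x) * ∑ x', (∑ s', p s' x') * W x' y))) = 0 := by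
  classical
  -- basic facts
  have hq1 : ∑ x, (∑ s, p s x) = 1 := (Finset.sum_comm).trans hp1
  have hqpos : ∀ x, 0 < ∑ s, p s x := hX
  -- α is nonempty
  have hne : Nonempty α := by
    rcases isEmpty_or_nonempty α with h | h
    · exfalso; rw [Finset.univ_eq_empty] at hH; simp at hH
    · exact h
  haveI := hne
  -- notation
  set q : α → ℝ := fun x => ∑ s, p s x with hqdef
  have hq1' : ∑ x, q x = 1 := hq1
  -- Step 1: attainment of the infimum.
  set K : Set (α → ℝ) := {f | (∑ x, q x * f x) = 0 ∧ (∑ x, q x * (f x) ^ 2) = 1} with hKdef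
  set Φ : (α → ℝ) → ℝ := fun f => ∑ s, (∑ x, p s x) *
      ((∑ x, p s x * f x) / (∑ x, p s x)) ^ 2 with hΦdef
  have hset : { t : ℝ | ∃ f : α → ℝ,
        (∑ x, (∑ s, p s x) * f x) = 0 ∧ (∑ x, (∑ s, p s x) * (f x) ^ 2) = 1 ∧
        t = ∑ s, (∑ x, p s x) *
          ((∑ x, p s x * f x) / (∑ x, p s x)) ^ 2 } = Φ '' K := by
    ext t
    constructor
    · rintro ⟨f, h1, h2, h3⟩; exact ⟨f, ⟨h1, h2⟩, h3.symm⟩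
    · rintro ⟨f, ⟨h1, h2⟩, h3⟩; exact ⟨f, h1, h2, h3.symm⟩
  have hΦc : Continuous Φ := by
    apply continuous_finset_sum
    intro s _
    exact continuous_const.mul ((((continuous_finset_sum _ fun x _ =>
      continuous_const.mul (continuous_apply x)).div_const _)).pow 2)
  have hKclosed : IsClosed K := by
    have c1 : Continuous (fun f : α → ℝ => ∑ x, q x * f x) :=
      continuous_finset_sum _ fun x _ => continuous_const.mul (continuous_apply x)
    have c2 : Continuous (fun f : α → ℝ => ∑ x, q x * (f x) ^ 2) :=
      continuous_finset_sum _ fun x _ => continuous_const.mul ((continuous_apply x).pow 2)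
    exact (isClosed_eq c1 continuous_const).inter (isClosed_eq c2 continuous_const)
  -- minimum of q
  obtain ⟨x₀⟩ := hne
  set m : ℝ := Finset.univ.inf' (Finset.univ_nonempty) q with hmdef
  have hm : 0 < m := by
    rw [hmdef, Finset.lt_inf'_iff]
    exact fun x _ => hqpos x
  have hKbdd : Bornology.IsBounded K := by
    apply (Metric.isBounded_closedBall (x := (0 : α → ℝ)) (r := 1 + 1/m)).subset
    intro f hf
    obtain ⟨hf1, hf2⟩ := hf
    rw [Metric.mem_closedBall, dist_zero_right]
    have hR : (0:ℝ) ≤ 1 + 1/m := by positivity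
    rw [pi_norm_le_iff_of_nonneg hR]
    intro x
    rw [Real.norm_eq_abs]
    have h1 : q x * (f x) ^ 2 ≤ 1 := by
      rw [← hf2]
      exact Finset.single_le_sum (fun i _ => mul_nonneg (hqpos i).le (sq_nonneg _)) (Finset.mem_univ x)
    have h2 : (f x) ^ 2 ≤ 1 / m := by
      have hqm : m ≤ q x := Finset.inf'_le _ (Finset.mem_univ x)
      rw [le_div_iff₀ hm]
      nlinarith [sq_nonneg (f x), hqpos x]
    nlinarith [sq_abs (f x), abs_nonneg (f x), sq_nonneg (|f x| - 1), one_div_pos.2 hm]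
  -- K is nonempty
  have hKne : K.Nonempty := by
    -- there is a point with 0 < q a < 1
    obtain ⟨a, h0a, h1a⟩ : ∃ a : α, 0 < q a ∧ q a < 1 := by
      by_cases hb : ∃ b : α, b ≠ x₀
      · obtain ⟨b, hb⟩ := hb
        refine ⟨x₀, hqpos x₀, ?_⟩
        have : q x₀ + q b ≤ ∑ x, q x := by
          rw [← Finset.sum_erase_add _ _ (Finset.mem_univ x₀), add_comm]
          have : q b ≤ ∑ x ∈ Finset.univ.erase x₀, q x :=
            Finset.single_le_sum (fun i _ => (hqpos i).le)
              (Finset.mem_erase.2 ⟨hb, Finset.mem_univ b⟩)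
          linarith
        rw [hq1'] at this
        linarith [hqpos b]
      · exfalso
        push_neg at hb
        have huniv : (Finset.univ : Finset α) = {x₀} := by
          ext b; simp [hb b]
        rw [huniv, Finset.sum_singleton] at hH hq1'
        have h1 : (∑ s, p s x₀) = 1 := hq1'
        rw [h1] at hH
        simp at hH
    set c2 : ℝ := q a * (1 - q a) with hc2def
    have hc2 : 0 < c2 := mul_pos h0a (by linarith)
    refine ⟨fun x => ((if x = a then 1 else 0) - q a) / Real.sqrt c2, ?_, ?_⟩
    · show (∑ x, q x * (((if x = a then 1 else 0) - q a) / Real.sqrt c2)) = 0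
      have : ∀ x, q x * (((if x = a then (1:ℝ) else 0) - q a) / Real.sqrt c2)
          = (q x * ((if x = a then 1 else 0) - q a)) * (Real.sqrt c2)⁻¹ := fun x => by ring
      rw [Finset.sum_congr rfl (fun x _ => this x), ← Finset.sum_mul]
      have : ∑ x, q x * ((if x = a then (1:ℝ) else 0) - q a) = 0 := by
        simp only [mul_sub, Finset.sum_sub_distrib, mul_ite, mul_one, mul_zero,
          Finset.sum_ite_eq', Finset.mem_univ, if_true, ← Finset.sum_mul, hq1', one_mul, sub_self]
      rw [this, zero_mul]
    · show (∑ x, q x * ((((if x = a then 1 else 0) - q a) / Real.sqrt c2)) ^ 2) = 1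
      have hs : Real.sqrt c2 ^ 2 = c2 := Real.sq_sqrt hc2.le
      have : ∀ x, q x * ((((if x = a then (1:ℝ) else 0) - q a) / Real.sqrt c2)) ^ 2
          = (q x * ((if x = a then 1 else 0) - q a) ^ 2) * (c2)⁻¹ := by
        intro x
        rw [div_pow, hs]
        ring
      rw [Finset.sum_congr rfl (fun x _ => this x), ← Finset.sum_mul]
      have hsum : ∑ x, q x * ((if x = a then (1:ℝ) else 0) - q a) ^ 2 = c2 := by
        have : ∀ x, q x * ((if x = a then (1:ℝ) else 0) - q a) ^ 2
            = (if x = a then q x * ((1 - q a)^2 - (q a)^2) else 0) + q x * (q a)^2 := by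
          intro x
          by_cases hx : x = a <;> simp [hx] <;> ring
        rw [Finset.sum_congr rfl (fun x _ => this x), Finset.sum_add_distrib,
          Finset.sum_ite_eq', ← Finset.sum_mul, hq1']
        simp only [Finset.mem_univ, if_true, one_mul, hc2def]
        ring
      rw [hsum, mul_inv_cancel₀ hc2.ne']
  -- Compactness and attainment
  have hKcpt : IsCompact K := Metric.isCompact_of_isClosed_isBounded hKclosed hKbdd
  have himg : IsCompact (Φ '' K) := hKcpt.image hΦc
  have himgne : (Φ '' K).Nonempty := hKne.image Φ
  have hmem : (0:ℝ) ∈ Φ '' K := by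
    rw [hset] at hδ
    rw [← hδ]
    exact himg.sInf_mem himgne
  obtain ⟨f, ⟨hf1, hf2⟩, hf0⟩ := hmem
  -- conditional means all vanish
  have hzero : ∀ s, ∑ x, p s x * f x = 0 := by
    have hterm : ∀ s ∈ Finset.univ, (∑ x, p s x) *
        ((∑ x, p s x * f x) / (∑ x, p s x)) ^ 2 = 0 := by
      rw [← Finset.sum_eq_zero_iff_of_nonneg]
      · exact hf0
      · intro s _
        have h1 : (0:ℝ) ≤ ∑ x, p s x := Finset.sum_nonneg fun x _ => hp0 s x
        positivity
    intro s
    have h := hterm s (Finset.mem_univ s)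
    by_cases hps : (∑ x, p s x) = 0
    · have : ∀ x ∈ Finset.univ, p s x = 0 :=
        (Finset.sum_eq_zero_iff_of_nonneg (fun x _ => hp0 s x)).1 hps
      exact Finset.sum_eq_zero fun x _ => by rw [this x (Finset.mem_univ x), zero_mul]
    · rcases mul_eq_zero.1 h with h' | h'
      · exact absurd h' hps
      · have := pow_eq_zero_iff (n := 2) (by norm_num) |>.1 h'
        rcases div_eq_zero_iff.1 this with h'' | h''
        · exact h''
        · exact absurd h'' hps
  -- bound on f
  set M : ℝ := 1 + ∑ x, |f x| with hMdef
  have hMpos : 0 < M := by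
    have : (0:ℝ) ≤ ∑ x, |f x| := Finset.sum_nonneg fun x _ => abs_nonneg _
    rw [hMdef]; linarith
  have hfM : ∀ x, |f x| < M := by
    intro x
    have : |f x| ≤ ∑ x, |f x| :=
      Finset.single_le_sum (fun i _ => abs_nonneg (f i)) (Finset.mem_univ x)
    rw [hMdef]; linarith
  have h2M : (0:ℝ) < 2 * M := by linarith
  -- the channel
  set W : α → Bool → ℝ := fun x y => cond y (1/2 + f x / (2*M)) (1/2 - f x / (2*M)) with hWdef
  have hWt : ∀ x, W x true = 1/2 + f x / (2*M) := fun x => rfl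
  have hWf : ∀ x, W x false = 1/2 - f x / (2*M) := fun x => rfl
  have hflt : ∀ x, f x / (2*M) < 1/2 := by
    intro x
    rw [div_lt_iff₀ h2M]
    have := (abs_lt.1 (hfM x)).2
    nlinarith
  have hfgt : ∀ x, -(1/2) < f x / (2*M) := by
    intro x
    rw [neg_lt, ← neg_div, div_lt_iff₀ h2M]
    have := (abs_lt.1 (hfM x)).1
    nlinarith
  have hWpos : ∀ x y, 0 < W x y := by
    intro x y
    cases y
    · rw [hWf]; have := hflt x; linarith
    · rw [hWt]; have := hfgt x; linarith
  have hWlt1 : ∀ x y, W x y < 1 := by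
    intro x y
    cases y
    · rw [hWf]; have := hfgt x; linarith
    · rw [hWt]; have := hflt x; linarith
  -- marginal of Y
  have hYt : ∑ x, q x * W x true = 1/2 := by
    have : ∀ x, q x * W x true = q x * (1/2) + (q x * f x) * (2*M)⁻¹ := by
      intro x; rw [hWt]; ring
    rw [Finset.sum_congr rfl (fun x _ => this x), Finset.sum_add_distrib,
      ← Finset.sum_mul, ← Finset.sum_mul, hq1', hf1]
    ring
  have hYf : ∑ x, q x * W x false = 1/2 := by
    have : ∀ x, q x * W x false = q x * (1/2) - (q x * f x) * (2*M)⁻¹ := by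
      intro x; rw [hWf]; ring
    rw [Finset.sum_congr rfl (fun x _ => this x), Finset.sum_sub_distrib,
      ← Finset.sum_mul, ← Finset.sum_mul, hq1', hf1]
    ring
  -- conditional channel output
  have hc : ∀ s y, ∑ x, p s x * W x y = (∑ x, p s x) * (1/2) := by
    intro s y
    cases y
    · have : ∀ x, p s x * W x false = p s x * (1/2) - (p s x * f x) * (2*M)⁻¹ := by
        intro x; rw [hWf]; ring
      rw [Finset.sum_congr rfl (fun x _ => this x), Finset.sum_sub_distrib,
        ← Finset.sum_mul, ← Finset.sum_mul, hzero s]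
      ring
    · have : ∀ x, p s x * W x true = p s x * (1/2) + (p s x * f x) * (2*M)⁻¹ := by
        intro x; rw [hWt]; ring
      rw [Finset.sum_congr rfl (fun x _ => this x), Finset.sum_add_distrib,
        ← Finset.sum_mul, ← Finset.sum_mul, hzero s]
      ring
  -- f is not identically zero
  have hfnz : ∃ x, f x ≠ 0 := by
    by_contra h
    push_neg at h
    have hz : ∑ x, q x * (f x) ^ 2 = 0 :=
      Finset.sum_eq_zero fun x _ => by rw [h x]; ring
    rw [hf2] at hz
    norm_num at hz
  refine ⟨W, fun x y => (hWpos x y).le, fun x => by rw [hWt, hWf]; ring, ?_, ?_, ?_⟩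
  · -- I(X;Y) > 0
    have hrew : ∀ x, (∑ y : Bool, (∑ s, p s x) * W x y *
        Real.logb 2 (((∑ s, p s x) * W x y) /
          ((∑ s, p s x) * ∑ x', (∑ s, p s x') * W x' y)))
        = q x * (W x true * Real.logb 2 (2 * W x true)
            + (1 - W x true) * Real.logb 2 (2 * (1 - W x true))) := by
      intro x
      rw [Fintype.sum_bool]
      have hqx : q x ≠ 0 := (hqpos x).ne'
      have hWft : W x false = 1 - W x true := by rw [hWt, hWf]; ring
      have hst : (∑ x', (∑ s, p s x') * W x' true) = 1/2 := hYt
      have hsf : (∑ x', (∑ s, p s x') * W x' false) = 1/2 := hYf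
      show q x * W x true * Real.logb 2 ((q x * W x true) / (q x * ∑ x', q x' * W x' true))
          + q x * W x false * Real.logb 2 ((q x * W x false) / (q x * ∑ x', q x' * W x' false))
          = _
      rw [hYt, hYf, hWft]
      rw [mul_div_mul_left _ _ hqx, mul_div_mul_left _ _ hqx]
      have hhalf : ∀ w : ℝ, w / (1/2) = 2 * w := fun w => by ring
      rw [hhalf, hhalf]
      ring
    rw [Finset.sum_congr rfl (fun x _ => hrew x)]
    have hnonneg : ∀ x ∈ Finset.univ, 0 ≤ q x * (W x true * Real.logb 2 (2 * W x true)
        + (1 - W x true) * Real.logb 2 (2 * (1 - W x true))) := by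
      intro x _
      exact mul_nonneg (hqpos x).le (kl_bin_nonneg (hWpos x true) (hWlt1 x true))
    obtain ⟨b, hb⟩ := hfnz
    have hbne : W b true ≠ 1/2 := by
      rw [hWt]
      intro h
      have : f b / (2*M) = 0 := by linarith
      exact hb (by field_simp at this; simpa using this)
    have hpos : 0 < q b * (W b true * Real.logb 2 (2 * W b true)
        + (1 - W b true) * Real.logb 2 (2 * (1 - W b true))) :=
      mul_pos (hqpos b) (kl_bin_pos (hWpos b true) (hWlt1 b true) hbne)
    exact Finset.sum_pos' hnonneg ⟨b, Finset.mem_univ b, hpos⟩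
  · -- independence
    intro s y
    show ∑ x, p s x * W x y = (∑ x, p s x) * ∑ x', q x' * W x' y
    rw [hc s y]
    cases y
    · rw [hYf]
    · rw [hYt]
  · -- I(S;Y) = 0
    apply Finset.sum_eq_zero
    intro s _
    rw [Fintype.sum_bool]
    show (∑ x, p s x * W x true) * Real.logb 2 ((∑ x, p s x * W x true) /
          ((∑ x, p s x) * ∑ x', q x' * W x' true))
        + (∑ x, p s x * W x false) * Real.logb 2 ((∑ x, p s x * W x false) /
          ((∑ x, p s x) * ∑ x', q x' * W x' false)) = 0
    rw [hc s true, hc s false, hYt, hYf]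
    by_cases hps : (∑ x, p s x) = 0
    · rw [hps]; ring
    · have : ((∑ x, p s x) * (1/2)) / ((∑ x, p s x) * (1/2)) = 1 :=
        div_self (mul_ne_zero hps (by norm_num))
      rw [this, Real.logb_one]
      ring
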